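/- If f is analytic on the open unit disk D with f(0)=0, f'(0)=1, and |z f'(z) - f(z)| < 1/2 for all z in D, then the Taylor coefficients a_k of f at 0 satisfy |a_k| ≤ 1/(2(k-1)) for all k ≥ 2. -/

import Mathlib

open Metric Complex

open FormalMultilinearSeries in
/-- The power series of `f` built from the coefficients `a`. -/
private lemma aux_hp (f : ℂ → ℂ) (a : ℕ → ℂ)
    (ha : ∀ z ∈ ball (0:ℂ) 1, HasSum (fun k : ℕ => a k * z ^ k) (f z)) :
    HasFPowerSeriesOnBall f (ofScalars ℂ a) 0 1 := by
  constructor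
  · -- 1 ≤ radius
    apply ENNReal.le_of_forall_nnreal_lt
    intro r hr
    have hr1 : (r : ℝ) < 1 := by exact_mod_cast hr
    have hmem : ((r : ℝ) : ℂ) ∈ ball (0:ℂ) 1 := by
      simp [_root_.abs_of_nonneg r.coe_nonneg, hr1]
    have hsum := (ha _ hmem).summable
    have htend := hsum.tendsto_atTop_zero
    have htend' : Filter.Tendsto (fun n => ‖ofScalars ℂ a n‖ * (r : ℝ) ^ n)
        Filter.atTop (nhds 0) := by
      have := htend.norm
      simp only [norm_zero] at this
      refine this.congr fun n => ?_
      rw [ofScalars_norm, norm_mul, norm_pow]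
      simp [_root_.abs_of_nonneg r.coe_nonneg]
    exact (ofScalars ℂ a).le_radius_of_tendsto htend'
  · exact one_pos
  · intro y hy
    have hy' : y ∈ ball (0:ℂ) 1 := by
      simpa [Metric.emetric_ball_nnreal, enorm_eq_nnnorm, ← NNReal.coe_lt_coe] using hy
    have := ha y hy'
    rw [zero_add]
    refine this.congr_fun fun n => ?_
    rw [ofScalars_apply_eq, smul_eq_mul]


open FormalMultilinearSeries NNReal

private lemma aux_gsum (f : ℂ → ℂ) (a : ℕ → ℂ)
    (hp : HasFPowerSeriesOnBall f (ofScalars ℂ a) 0 1)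
    {z : ℂ} (hz : z ∈ ball (0:ℂ) 1) :
    HasSum (fun k : ℕ => ((k : ℂ) - 1) * a k * z ^ k) (z * deriv f z - f z) := by
  have hz' : z ∈ Metric.eball (0:ℂ) 1 := by
    simpa [Metric.emetric_ball_nnreal, enorm_eq_nnnorm, ← NNReal.coe_lt_coe] using hz
  have h1 : HasSum (fun n => (ofScalars ℂ a).derivSeries n (fun _ => z))
      (fderiv ℂ f (0 + z)) := hp.fderiv.hasSum hz'
  have h2 := (ContinuousLinearMap.apply ℂ ℂ z).hasSum h1
  simp only [ContinuousLinearMap.apply_apply, zero_add] at h2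
  have h3 : ∀ n : ℕ, (ofScalars ℂ a).derivSeries n (fun _ => z) z
      = ((n : ℂ) + 1) * a (n + 1) * z ^ (n + 1) := by
    intro n
    rw [derivSeries_apply_diag, ofScalars_apply_eq]
    simp [smul_eq_mul]
    ring
  have hfz : fderiv ℂ f z z = z * deriv f z := by
    have h := (fderiv ℂ f z).map_smul z (1:ℂ)
    simp only [smul_eq_mul, mul_one] at h
    rw [h, fderiv_apply_one_eq_deriv]
  rw [hfz] at h2
  have h4 : HasSum (fun n : ℕ => ((n + 1 : ℕ) : ℂ) * a (n + 1) * z ^ (n + 1))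
      (z * deriv f z) := by
    refine h2.congr_fun fun n => ?_
    rw [h3]; push_cast; ring
  have h5 : HasSum (fun k : ℕ => (k : ℂ) * a k * z ^ k) (z * deriv f z) := by
    rw [← hasSum_nat_add_iff' 1]
    simpa using h4
  have hsf : HasSum (fun k : ℕ => a k * z ^ k) (f z) := by
    have h := hp.hasSum hz'
    rw [zero_add] at h
    refine h.congr_fun fun n => ?_
    rw [ofScalars_apply_eq, smul_eq_mul]
  refine (h5.sub hsf).congr_fun fun k => ?_
  ring

theorem stmt_0 (f : ℂ → ℂ) (a : ℕ → ℂ)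
    (hf : DifferentiableOn ℂ f (ball (0:ℂ) 1))
    (ha : ∀ z ∈ ball (0:ℂ) 1, HasSum (fun k : ℕ => a k * z ^ k) (f z))
    (ha0 : a 0 = 0) (ha1 : a 1 = 1)
    (hΩ : ∀ z ∈ ball (0:ℂ) 1, ‖z * deriv f z - f z‖ < 1/2) :
    ∀ k : ℕ, 2 ≤ k → ‖a k‖ ≤ 1 / (2 * ((k : ℝ) - 1)) := by
  have hp := aux_hp f a ha
  intro k hk
  set g : ℂ → ℂ := fun z => z * deriv f z - f z with hgdef
  have hfan : AnalyticOnNhd ℂ f (ball (0:ℂ) 1) := hf.analyticOnNhd isOpen_ball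
  have hderiv : DifferentiableOn ℂ (deriv f) (ball (0:ℂ) 1) :=
    (hfan.deriv).differentiableOn
  have hgdiff : DifferentiableOn ℂ g (ball (0:ℂ) 1) :=
    (differentiableOn_id.mul hderiv).sub hf
  set b : ℕ → ℂ := fun n => ((n : ℂ) - 1) * a n with hbdef
  have key : ∀ R : ℝ, R ∈ Set.Ioo (0:ℝ) 1 → ‖b k‖ * R ^ k ≤ 1/2 := by
    intro R hR
    obtain ⟨hR0, hR1⟩ := hR
    set Rn : ℝ≥0 := ⟨R, hR0.le⟩ with hRndef
    have hRnR : (Rn : ℝ) = R := rfl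
    have hsub : closedBall (0:ℂ) (Rn : ℝ) ⊆ ball (0:ℂ) 1 := by
      rw [hRnR]; exact closedBall_subset_ball (by linarith)
    have hRnpos : 0 < Rn := by
      rw [← NNReal.coe_pos, hRnR]; exact hR0
    have hcb : HasFPowerSeriesOnBall g (cauchyPowerSeries g 0 Rn) 0 Rn :=
      (hgdiff.mono hsub).hasFPowerSeriesOnBall hRnpos
    have hq : HasFPowerSeriesOnBall g (FormalMultilinearSeries.ofScalars ℂ b) 0 Rn := by
      constructor
      · have hmem : ((R : ℂ)) ∈ ball (0:ℂ) 1 := by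
          rw [mem_ball_zero_iff, Complex.norm_real, Real.norm_eq_abs,
            _root_.abs_of_pos hR0]
          exact hR1
        have hsum := (aux_gsum f a hp hmem).summable
        have htend := hsum.tendsto_atTop_zero
        have htend' : Filter.Tendsto
            (fun n => ‖FormalMultilinearSeries.ofScalars ℂ b n‖ * (Rn : ℝ) ^ n)
            Filter.atTop (nhds 0) := by
          have := htend.norm
          simp only [norm_zero] at this
          refine this.congr fun n => ?_
          rw [FormalMultilinearSeries.ofScalars_norm]
          simp [hbdef, norm_mul, norm_pow, _root_.abs_of_pos hR0,
            Complex.norm_of_nonneg hR0.le, mul_assoc, hRnR]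
        exact (FormalMultilinearSeries.ofScalars ℂ b).le_radius_of_tendsto htend'
      · exact_mod_cast hRnpos
      · intro y hy
        have hy1 : y ∈ ball (0:ℂ) 1 := by
          rw [Metric.emetric_ball_nnreal] at hy
          exact ball_subset_ball (by rw [hRnR]; linarith) hy
        have h := aux_gsum f a hp hy1
        rw [zero_add]
        refine h.congr_fun fun n => ?_
        rw [FormalMultilinearSeries.ofScalars_apply_eq, smul_eq_mul, hbdef]
    have heq : FormalMultilinearSeries.ofScalars ℂ b = cauchyPowerSeries g 0 Rn :=
      hq.hasFPowerSeriesAt.eq_formalMultilinearSeries hcb.hasFPowerSeriesAt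
    -- bound the Cauchy coefficients
    have hcirc : ∀ θ : ℝ, circleMap 0 R θ ∈ ball (0:ℂ) 1 := by
      intro θ
      simp only [mem_ball_zero_iff, norm_circleMap_zero]
      rw [abs_of_pos hR0]; exact hR1
    have hgcont : Continuous fun θ : ℝ => ‖g (circleMap 0 R θ)‖ :=
      ((hgdiff.continuousOn).comp_continuous (continuous_circleMap 0 R)
        hcirc).norm
    have hint : (∫ θ : ℝ in (0)..2 * Real.pi, ‖g (circleMap 0 R θ)‖) ≤ Real.pi := by
      have h1 : (∫ θ : ℝ in (0)..2 * Real.pi, ‖g (circleMap 0 R θ)‖)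
          ≤ ∫ _ : ℝ in (0)..2 * Real.pi, (1/2 : ℝ) := by
        refine intervalIntegral.integral_mono_on Real.two_pi_pos.le
          (hgcont.intervalIntegrable _ _) intervalIntegrable_const fun θ _ => ?_
        exact (hΩ _ (hcirc θ)).le
      simpa using h1.trans_eq (by simp; ring)
    have hnorm : ‖FormalMultilinearSeries.ofScalars ℂ b k‖ ≤ (1/2) * (R ^ k)⁻¹ := by
      rw [heq, hRnR]
      refine (norm_cauchyPowerSeries_le g 0 R k).trans ?_
      rw [_root_.abs_of_pos hR0, inv_pow]
      have h2 : (2 * Real.pi)⁻¹ * (∫ θ : ℝ in (0)..2 * Real.pi, ‖g (circleMap 0 R θ)‖)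
          ≤ 1/2 := by
        rw [inv_mul_le_iff₀ Real.two_pi_pos]
        calc (∫ θ : ℝ in (0)..2 * Real.pi, ‖g (circleMap 0 R θ)‖) ≤ Real.pi := hint
          _ = 2 * Real.pi * (1/2) := by ring
      exact mul_le_mul_of_nonneg_right h2 (by positivity)
    have hbk : ‖b k‖ ≤ (1/2) * (R ^ k)⁻¹ := by
      rwa [← FormalMultilinearSeries.ofScalars_norm (E := ℂ)]
    rw [← le_div_iff₀ (pow_pos hR0 k)]
    rw [div_eq_mul_inv]
    exact hbk
  -- take the limit R → 1⁻
  have hc : ‖b k‖ ≤ 1/2 := by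
    have hne : (nhdsWithin (1:ℝ) (Set.Ioo (0:ℝ) 1)).NeBot := by
      apply mem_closure_iff_nhdsWithin_neBot.mp
      rw [closure_Ioo (by norm_num : (0:ℝ) ≠ 1)]
      exact Set.right_mem_Icc.mpr (by norm_num)
    have htend : Filter.Tendsto (fun R : ℝ => ‖b k‖ * R ^ k)
        (nhdsWithin (1:ℝ) (Set.Ioo (0:ℝ) 1)) (nhds (‖b k‖ * 1 ^ k)) :=
      ((continuous_const.mul (continuous_pow k)).tendsto 1).mono_left nhdsWithin_le_nhds
    have hle := le_of_tendsto htend (by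
      filter_upwards [self_mem_nhdsWithin] with R hR using key R hR)
    simpa using hle
  -- final arithmetic
  have hk1 : ((k : ℂ) - 1) = (((k : ℝ) - 1 : ℝ) : ℂ) := by push_cast; ring
  have hkpos : (0:ℝ) < (k : ℝ) - 1 := by
    have : (2:ℝ) ≤ (k : ℝ) := by exact_mod_cast hk
    linarith
  rw [hbdef] at hc
  simp only [norm_mul, hk1, Complex.norm_real, Real.norm_eq_abs,
    abs_of_pos hkpos] at hc
  rw [le_div_iff₀ (by positivity : (0:ℝ) < 2 * ((k:ℝ) - 1))]
  nlinarith [norm_nonneg (a k)]
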